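/- Let X be a set, Y a nonempty subset of X, and S(Y) a subsemigroup of T(Y) with I_Y ∈ S(Y). Then T_{S(Y)}(X) is a unit-regular semigroup if and only if either (i) S(Y) is a subgroup of Sym(Y) and X \ Y is finite, or (ii) S(Y) is unit-regular and Y = X. -/
import Mathlib


open Set Function

/-- `S` is a subsemigroup of the full transformation semigroup on `A`
(closed under composition; composition order is irrelevant here since we
quantify over all ordered pairs). -/
def IsSubsemigroupOn {A : Type*} (S : Set (A → A)) : Prop :=
  ∀ a ∈ S, ∀ b ∈ S, a ∘ b ∈ S

/-- `S` is a subgroup of `Sym(A)`. -/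
def IsSubgroupOfSym {A : Type*} (S : Set (A → A)) : Prop :=
  IsSubsemigroupOn S ∧ (∀ a ∈ S, Function.Bijective a) ∧ (id ∈ S) ∧
    ∀ a ∈ S, ∃ b ∈ S, a ∘ b = id ∧ b ∘ a = id

/-- `S` is a regular semigroup of transformations: every `a ∈ S` has `b ∈ S`
with `aba = a` (composed left to right, i.e. `x ↦ a (b (a x))`). -/
def IsRegularOn {A : Type*} (S : Set (A → A)) : Prop :=
  ∀ a ∈ S, ∃ b ∈ S, a ∘ b ∘ a = a

/-- `S` is an inverse semigroup of transformations. -/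
def IsInverseOn {A : Type*} (S : Set (A → A)) : Prop :=
  ∀ a ∈ S, ∃! b, b ∈ S ∧ a ∘ b ∘ a = a ∧ b ∘ a ∘ b = b

/-- `u` is a unit of the transformation monoid `S`. -/
def IsUnitOn {A : Type*} (S : Set (A → A)) (u : A → A) : Prop :=
  u ∈ S ∧ ∃ v ∈ S, u ∘ v = id ∧ v ∘ u = id

/-- `a` is a unit-regular element of `S`. -/
def UnitRegularElem {A : Type*} (S : Set (A → A)) (a : A → A) : Prop :=
  ∃ u, IsUnitOn S u ∧ a ∘ u ∘ a = a

/-- `S` is a unit-regular transformation monoid. -/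
def IsUnitRegularOn {A : Type*} (S : Set (A → A)) : Prop :=
  ∀ a ∈ S, UnitRegularElem S a

/-- `T` is a transversal of `ker f`: it contains exactly one element of
each kernel class. -/
def IsTransversalOf {A : Type*} (f : A → A) (T : Set A) : Prop :=
  ∀ x : A, ∃! t, t ∈ T ∧ f t = f x

/-- `T'` is a transversal of the kernel of the restriction of `f` to `Y`,
viewed inside the ambient set. -/
def IsTransversalOfOn {A : Type*} (f : A → A) (Y T' : Set A) : Prop :=
  T' ⊆ Y ∧ ∀ y ∈ Y, ∃! t, t ∈ T' ∧ f t = f y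

/-- The semigroup `T_{S(Y)}(X)` of all transformations of `X` that leave `Y`
invariant and whose restriction-corestriction to `Y` lies in `S`. -/
def TSemi {X : Type*} (Y : Set X) (S : Set (Y → Y)) : Set (X → X) :=
  {f | ∃ h : MapsTo f Y Y, MapsTo.restrict f Y Y h ∈ S}

/-! ### Auxiliary lemmas -/

lemma exists_perm_extend {C : Type*} [Finite C] (Z : Set C) (g : Z → C)
    (hg : Function.Injective g) :
    ∃ σ : Equiv.Perm C, ∀ z : Z, σ (z : C) = g z := by
  classical
  cases nonempty_fintype C
  have card1 : Fintype.card ↥(Set.range g) = Fintype.card Z :=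
    Fintype.card_congr (Equiv.ofInjective g hg).symm
  have card2 : Fintype.card ↥(Set.range g)ᶜ = Fintype.card ↥Zᶜ := by
    rw [Fintype.card_compl_set, Fintype.card_compl_set, card1]
  let e2 : ↥Zᶜ ≃ ↥(Set.range g)ᶜ := Fintype.equivOfCardEq card2.symm
  refine ⟨(Equiv.Set.sumCompl Z).symm.trans
    ((Equiv.sumCongr (Equiv.ofInjective g hg) e2).trans (Equiv.Set.sumCompl (Set.range g))),
    fun z => ?_⟩
  have h1 : (Equiv.Set.sumCompl Z).symm (z : C) = Sum.inl z := by
    rw [Equiv.Set.sumCompl_symm_apply_of_mem z.2]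
  simp [h1]

lemma exists_inj_not_surj {C : Type*} [Infinite C] :
    ∃ g : C → C, Function.Injective g ∧ ¬ Function.Surjective g := by
  classical
  let e := Infinite.natEmbedding C
  refine ⟨fun x => if h : ∃ n, e n = x then e (h.choose + 1) else x, ?_, ?_⟩
  · intro x y hxy
    by_cases hx : ∃ n, e n = x <;> by_cases hy : ∃ n, e n = y
    · simp only [dif_pos hx, dif_pos hy] at hxy
      have := Nat.add_right_cancel (e.injective hxy)
      rw [← hx.choose_spec, ← hy.choose_spec, this]
    · simp only [dif_pos hx, dif_neg hy] at hxy
      exact absurd ⟨_, hxy⟩ hy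
    · simp only [dif_neg hx, dif_pos hy] at hxy
      exact absurd ⟨_, hxy.symm⟩ hx
    · simpa [dif_neg hx, dif_neg hy] using hxy
  · intro hsurj
    obtain ⟨x, hx⟩ := hsurj (e 0)
    by_cases h : ∃ n, e n = x
    · simp only [dif_pos h] at hx
      exact Nat.succ_ne_zero _ (e.injective hx)
    · simp only [dif_neg h] at hx
      exact h ⟨0, hx.symm⟩

lemma restrict_eq' {X : Type*} {Y : Set X} {f : X → X} (hm : MapsTo f Y Y) (a : Y → Y)
    (hfa : ∀ p : Y, f ↑p = ↑(a p)) : MapsTo.restrict f Y Y hm = a := by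
  funext p
  apply Subtype.val_injective
  rw [MapsTo.val_restrict_apply]
  exact hfa p

lemma unit_mapsTo_compl {X : Type*} {Y : Set X} {u v : X → X}
    (hmv : MapsTo v Y Y) (hvu : v ∘ u = id) : MapsTo u Yᶜ Yᶜ := by
  intro x hx
  intro hux
  apply hx
  have : v (u x) = x := congrFun hvu x
  rw [← this]
  exact hmv hux

theorem stmt7 {X : Type*} (Y : Set X) (S : Set (Y → Y)) (hY : Y.Nonempty)
    (hS : IsSubsemigroupOn S) (hid : id ∈ S) :
    IsUnitRegularOn (TSemi Y S) ↔
      ((IsSubgroupOfSym S ∧ Yᶜ.Finite) ∨ (IsUnitRegularOn S ∧ Y = Set.univ)) := by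
  classical
  constructor
  · intro hur
    by_cases hYU : Y = Set.univ
    · subst hYU
      right
      refine ⟨?_, rfl⟩
      intro a haS
      -- lift a to X
      set f : X → X := fun x => ↑(a ⟨x, trivial⟩) with hfdef
      have hfY : ∀ p : (Set.univ : Set X), f ↑p = ↑(a p) := fun p => rfl
      have hmf : MapsTo f Set.univ Set.univ := mapsTo_univ f _
      obtain ⟨u, ⟨⟨hmu, hu'S⟩, v, ⟨hmv, hv'S⟩, huv, hvu⟩, hfuf⟩ :=
        hur f ⟨hmf, by rwa [restrict_eq' hmf a hfY]⟩
      set u' := MapsTo.restrict u Set.univ Set.univ hmu with hu'def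
      set v' := MapsTo.restrict v Set.univ Set.univ hmv with hv'def
      have huval : ∀ p : (Set.univ : Set X), u ↑p = ↑(u' p) :=
        fun p => (MapsTo.val_restrict_apply hmu p).symm
      have hvval : ∀ p : (Set.univ : Set X), v ↑p = ↑(v' p) :=
        fun p => (MapsTo.val_restrict_apply hmv p).symm
      refine ⟨u', ⟨hu'S, v', hv'S, ?_, ?_⟩, ?_⟩
      · funext p
        apply Subtype.val_injective
        have : (↑(u' (v' p)) : X) = u (v ↑p) := by rw [hvval, huval]
        rw [comp_apply, this]
        exact congrFun huv ↑p
      · funext p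
        apply Subtype.val_injective
        have : (↑(v' (u' p)) : X) = v (u ↑p) := by rw [huval, hvval]
        rw [comp_apply, this]
        exact congrFun hvu ↑p
      · funext p
        apply Subtype.val_injective
        simp only [comp_apply]
        have h1 := congrFun hfuf ↑p
        simp only [comp_apply] at h1
        rw [hfY p, huval (a p), hfY (u' (a p))] at h1
        exact h1
    · left
      have hne : Yᶜ.Nonempty := by
        rw [nonempty_compl]
        exact hYU
      obtain ⟨p₀, hp₀⟩ := hne
      -- Step A : every element of S is surjective
      have hsurjS : ∀ a ∈ S, Function.Surjective a := by
        intro a haS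
        by_contra hsurj
        rw [Function.Surjective] at hsurj
        push_neg at hsurj
        obtain ⟨yb, hyb⟩ := hsurj
        set f : X → X := fun x => if h : x ∈ Y then ↑(a ⟨x, h⟩) else ↑yb with hfdef
        have hfY : ∀ p : Y, f ↑p = ↑(a p) := by
          intro p
          simp only [hfdef, dif_pos p.2]
        have hmf : MapsTo f Y Y := by
          intro x hx
          rw [show f x = ↑(a ⟨x, hx⟩) from by simp only [hfdef, dif_pos hx]]
          exact (a ⟨x, hx⟩).2
        obtain ⟨u, ⟨⟨hmu, hu'S⟩, v, ⟨hmv, hv'S⟩, huv, hvu⟩, hfuf⟩ :=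
          hur f ⟨hmf, by rwa [restrict_eq' hmf a hfY]⟩
        have h1 := congrFun hfuf p₀
        simp only [comp_apply] at h1
        have e0 : f p₀ = ↑yb := by simp only [hfdef, dif_neg hp₀]
        rw [e0] at h1
        have hu : u ↑yb ∈ Y := hmu yb.2
        have e1 : f (u ↑yb) = ↑(a ⟨u ↑yb, hu⟩) := by simp only [hfdef, dif_pos hu]
        rw [e1] at h1
        exact hyb ⟨u ↑yb, hu⟩ (Subtype.val_injective h1)
      -- Step B : every element of S has an inverse in S
      have hinvS : ∀ a ∈ S, ∃ b ∈ S, a ∘ b = id ∧ b ∘ a = id := by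
        intro a haS
        set f : X → X := fun x => if h : x ∈ Y then ↑(a ⟨x, h⟩) else x with hfdef
        have hfY : ∀ p : Y, f ↑p = ↑(a p) := by
          intro p
          simp only [hfdef, dif_pos p.2]
        have hmf : MapsTo f Y Y := by
          intro x hx
          rw [show f x = ↑(a ⟨x, hx⟩) from by simp only [hfdef, dif_pos hx]]
          exact (a ⟨x, hx⟩).2
        obtain ⟨u, ⟨⟨hmu, hu'S⟩, v, ⟨hmv, hv'S⟩, huv, hvu⟩, hfuf⟩ :=
          hur f ⟨hmf, by rwa [restrict_eq' hmf a hfY]⟩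
        set u' := MapsTo.restrict u Y Y hmu with hu'def
        have huval : ∀ p : Y, u ↑p = ↑(u' p) :=
          fun p => (MapsTo.val_restrict_apply hmu p).symm
        have hau'a : ∀ p : Y, a (u' (a p)) = a p := by
          intro p
          apply Subtype.val_injective
          have h1 := congrFun hfuf ↑p
          simp only [comp_apply] at h1
          rw [hfY p] at h1
          rw [huval (a p)] at h1
          rw [hfY (u' (a p))] at h1
          exact h1
        have hau' : a ∘ u' = id := by
          funext q
          obtain ⟨p, rfl⟩ := hsurjS a haS q
          exact hau'a p
        have hu'sur : Function.Surjective u' := by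
          intro q
          refine ⟨⟨v ↑q, hmv q.2⟩, ?_⟩
          apply Subtype.val_injective
          rw [MapsTo.val_restrict_apply]
          exact congrFun huv ↑q
        have hu'a : u' ∘ a = id := by
          funext p
          obtain ⟨q, rfl⟩ := hu'sur p
          simp only [comp_apply, id_eq]
          have : a (u' q) = q := congrFun hau' q
          rw [this]
        exact ⟨u', hu'S, hau', hu'a⟩
      have hgrp : IsSubgroupOfSym S := by
        refine ⟨hS, ?_, hid, hinvS⟩
        intro a haS
        obtain ⟨b, _, hab, hba⟩ := hinvS a haS
        exact Function.bijective_iff_has_inverse.mpr ⟨b, congrFun hba, congrFun hab⟩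
      refine ⟨hgrp, ?_⟩
      -- Step C : Yᶜ is finite
      by_contra hfin
      haveI : Infinite ↥(Yᶜ) := Set.infinite_coe_iff.mpr hfin
      obtain ⟨g, hginj, hgnsur⟩ := exists_inj_not_surj (C := ↥(Yᶜ))
      set f : X → X := fun x => if h : x ∈ Y then x else ↑(g ⟨x, h⟩) with hfdef
      have hfY : ∀ p : Y, f ↑p = ↑(id p) := by
        intro p
        simp only [hfdef, dif_pos p.2, id_eq]
      have hmf : MapsTo f Y Y := by
        intro x hx
        rw [show f x = x from by simp only [hfdef, dif_pos hx]]
        exact hx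
      obtain ⟨u, ⟨⟨hmu, hu'S⟩, v, ⟨hmv, hv'S⟩, huv, hvu⟩, hfuf⟩ :=
        hur f ⟨hmf, by rwa [restrict_eq' hmf id hfY]⟩
      have huinj : Function.Injective u :=
        Function.LeftInverse.injective (g := v) (congrFun hvu)
      have humc : MapsTo u Yᶜ Yᶜ := unit_mapsTo_compl hmv hvu
      have hvmc : MapsTo v Yᶜ Yᶜ := unit_mapsTo_compl hmu huv
      have key : ∀ z : ↥(Yᶜ), u ↑(g z) = ↑z := by
        intro z
        have hz : (↑z : X) ∉ Y := z.2
        have e1 : f ↑z = ↑(g z) := by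
          simp only [hfdef, dif_neg hz]
        have hgz : (↑(g z) : X) ∉ Y := (g z).2
        have hu : u ↑(g z) ∉ Y := humc hgz
        have h1 := congrFun hfuf ↑z
        simp only [comp_apply] at h1
        rw [e1] at h1
        have e2 : f (u ↑(g z)) = ↑(g ⟨u ↑(g z), hu⟩) := by
          simp only [hfdef, dif_neg hu]
        rw [e2] at h1
        have := hginj (Subtype.val_injective h1)
        exact congrArg Subtype.val this
      set w : ↥(Yᶜ) → ↥(Yᶜ) := fun e => ⟨u ↑e, humc e.2⟩ with hwdef
      have hwinj : Function.Injective w := by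
        intro e₁ e₂ h
        apply Subtype.val_injective
        exact huinj (congrArg Subtype.val h)
      apply hgnsur
      intro c
      refine ⟨w c, hwinj ?_⟩
      apply Subtype.val_injective
      show u ↑(g (w c)) = ↑(w c)
      exact key (w c)
  · rintro (⟨⟨hSsub, hSbij, hSid, hSinv⟩, hfin⟩ | ⟨hSur, hYU⟩)
    · -- case (i)
      haveI : Finite ↥(Yᶜ) := hfin.to_subtype
      rintro f ⟨hmf, haS⟩
      set a := MapsTo.restrict f Y Y hmf with hadef
      have hfY : ∀ p : Y, f ↑p = ↑(a p) := fun p => (MapsTo.val_restrict_apply hmf p).symm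
      obtain ⟨b, hbS, hab, hba⟩ := hSinv a haS
      set Z : Set ↥(Yᶜ) := {c | ∃ x : X, x ∉ Y ∧ f x = ↑c} with hZdef
      have hpre : ∀ c : Z, (c : ↥(Yᶜ)).1 ∈ Set.range f → True := fun _ _ => trivial
      set g : Z → ↥(Yᶜ) := fun c => ⟨c.2.choose, c.2.choose_spec.1⟩ with hgdef
      have hgspec : ∀ c : Z, f ↑(g c) = ↑(c : ↥(Yᶜ)) := fun c => c.2.choose_spec.2
      have hginj : Function.Injective g := by
        intro c₁ c₂ h
        apply Subtype.val_injective
        apply Subtype.val_injective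
        rw [← hgspec c₁, ← hgspec c₂, h]
      obtain ⟨σ, hσ⟩ := exists_perm_extend Z g hginj
      set u : X → X := fun x => if h : x ∈ Y then ↑(b ⟨x, h⟩) else ↑(σ ⟨x, h⟩) with hudef
      set v : X → X := fun x => if h : x ∈ Y then ↑(a ⟨x, h⟩) else ↑(σ.symm ⟨x, h⟩) with hvdef
      have huY : ∀ p : Y, u ↑p = ↑(b p) := by
        intro p; simp only [hudef, dif_pos p.2]
      have hvY : ∀ p : Y, v ↑p = ↑(a p) := by
        intro p; simp only [hvdef, dif_pos p.2]
      have hmu : MapsTo u Y Y := by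
        intro x hx
        rw [show u x = ↑(b ⟨x, hx⟩) from huY ⟨x, hx⟩]
        exact (b ⟨x, hx⟩).2
      have hmv : MapsTo v Y Y := by
        intro x hx
        rw [show v x = ↑(a ⟨x, hx⟩) from hvY ⟨x, hx⟩]
        exact (a ⟨x, hx⟩).2
      have huT : u ∈ TSemi Y S := ⟨hmu, by rwa [restrict_eq' hmu b huY]⟩
      have hvT : v ∈ TSemi Y S := ⟨hmv, by rwa [restrict_eq' hmv a hvY]⟩
      have huv : u ∘ v = id := by
        funext x
        simp only [comp_apply, id_eq]
        by_cases h : x ∈ Y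
        · rw [hvY ⟨x, h⟩]
          rw [huY (a ⟨x, h⟩)]
          have : b (a ⟨x, h⟩) = ⟨x, h⟩ := congrFun hba ⟨x, h⟩
          rw [this]
        · have hvx : v x = ↑(σ.symm ⟨x, h⟩) := by simp only [hvdef, dif_neg h]
          have hvxc : v x ∉ Y := by rw [hvx]; exact (σ.symm ⟨x, h⟩).2
          rw [show u (v x) = ↑(σ ⟨v x, hvxc⟩) from by simp only [hudef, dif_neg hvxc]]
          have : (⟨v x, hvxc⟩ : ↥(Yᶜ)) = σ.symm ⟨x, h⟩ := Subtype.val_injective hvx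
          rw [this, Equiv.apply_symm_apply]
      have hvu : v ∘ u = id := by
        funext x
        simp only [comp_apply, id_eq]
        by_cases h : x ∈ Y
        · rw [huY ⟨x, h⟩]
          rw [hvY (b ⟨x, h⟩)]
          have : a (b ⟨x, h⟩) = ⟨x, h⟩ := congrFun hab ⟨x, h⟩
          rw [this]
        · have hux : u x = ↑(σ ⟨x, h⟩) := by simp only [hudef, dif_neg h]
          have huxc : u x ∉ Y := by rw [hux]; exact (σ ⟨x, h⟩).2
          rw [show v (u x) = ↑(σ.symm ⟨u x, huxc⟩) from by simp only [hvdef, dif_neg huxc]]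
          have : (⟨u x, huxc⟩ : ↥(Yᶜ)) = σ ⟨x, h⟩ := Subtype.val_injective hux
          rw [this, Equiv.symm_apply_apply]
      refine ⟨u, ⟨huT, v, hvT, huv, hvu⟩, ?_⟩
      funext x
      simp only [comp_apply]
      by_cases hz : f x ∈ Y
      · rw [show u (f x) = ↑(b ⟨f x, hz⟩) from huY ⟨f x, hz⟩]
        rw [hfY (b ⟨f x, hz⟩)]
        have : a (b ⟨f x, hz⟩) = ⟨f x, hz⟩ := congrFun hab ⟨f x, hz⟩
        rw [this]
      · have hxnY : x ∉ Y := fun hx => hz (hmf hx)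
        have hc : (⟨f x, hz⟩ : ↥(Yᶜ)) ∈ Z := ⟨x, hxnY, rfl⟩
        have e1 : u (f x) = ↑(σ ⟨f x, hz⟩) := by simp only [hudef, dif_neg hz]
        rw [e1]
        have e2 : σ ⟨f x, hz⟩ = g ⟨⟨f x, hz⟩, hc⟩ := hσ ⟨⟨f x, hz⟩, hc⟩
        rw [e2]
        exact hgspec ⟨⟨f x, hz⟩, hc⟩
    · -- case (ii)
      subst hYU
      rintro f ⟨hmf, haS⟩
      set a := MapsTo.restrict f Set.univ Set.univ hmf with hadef
      have hfY : ∀ p : (Set.univ : Set X), f ↑p = ↑(a p) :=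
        fun p => (MapsTo.val_restrict_apply hmf p).symm
      obtain ⟨u', ⟨hu'S, v', hv'S, hu'v', hv'u'⟩, hau'a⟩ := hSur a haS
      set u : X → X := fun x => ↑(u' ⟨x, trivial⟩) with hudef
      set v : X → X := fun x => ↑(v' ⟨x, trivial⟩) with hvdef
      have huY : ∀ p : (Set.univ : Set X), u ↑p = ↑(u' p) := fun p => rfl
      have hvY : ∀ p : (Set.univ : Set X), v ↑p = ↑(v' p) := fun p => rfl
      have hmu : MapsTo u Set.univ Set.univ := mapsTo_univ u _
      have hmv : MapsTo v Set.univ Set.univ := mapsTo_univ v _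
      have huT : u ∈ TSemi Set.univ S := ⟨hmu, by rwa [restrict_eq' hmu u' huY]⟩
      have hvT : v ∈ TSemi Set.univ S := ⟨hmv, by rwa [restrict_eq' hmv v' hvY]⟩
      have huv : u ∘ v = id := by
        funext x
        simp only [comp_apply, id_eq]
        rw [hvY ⟨x, trivial⟩, huY (v' ⟨x, trivial⟩)]
        have : u' (v' ⟨x, trivial⟩) = ⟨x, trivial⟩ := congrFun hu'v' ⟨x, trivial⟩
        rw [this]
      have hvu : v ∘ u = id := by
        funext x
        simp only [comp_apply, id_eq]
        rw [huY ⟨x, trivial⟩, hvY (u' ⟨x, trivial⟩)]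
        have : v' (u' ⟨x, trivial⟩) = ⟨x, trivial⟩ := congrFun hv'u' ⟨x, trivial⟩
        rw [this]
      refine ⟨u, ⟨huT, v, hvT, huv, hvu⟩, ?_⟩
      funext x
      simp only [comp_apply]
      have e0 : f x = ↑(a ⟨x, trivial⟩) := hfY ⟨x, trivial⟩
      have e1 : (⟨f x, trivial⟩ : ↥(Set.univ : Set X)) = a ⟨x, trivial⟩ :=
        Subtype.val_injective e0
      have e2 : u (f x) = ↑(u' (a ⟨x, trivial⟩)) := by
        rw [huY ⟨f x, trivial⟩, e1]
      rw [e2]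
      have e3 : f ↑(u' (a ⟨x, trivial⟩)) = ↑(a (u' (a ⟨x, trivial⟩))) :=
        hfY (u' (a ⟨x, trivial⟩))
      rw [e3]
      have := congrFun hau'a ⟨x, trivial⟩
      simp only [comp_apply] at this
      rw [this, ← e0]
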